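/- Let δ > 0, let e₁ = (1,0,0) ∈ ℝ³, and let W : ℝ³ → [0,∞) be a continuous function, not identically zero, supported in the closed ball of radius 1/6 centered at e₁/6. Let N ≥ 3 be an integer, set η_k = k^{-1/3} and ε_N = 1/log(log N), and define v₀ : ℝ³ → [0,∞) by v₀(ξ) = ε_N ∑_{k=1}^N 2^{2k/3} η_k · (W(ξ + (2^k - 1)e₁) + W(ξ - (2^k - 1)e₁))/2. If v : [0,δ/2] × ℝ³ → [0,∞) solves the Fourier-side cubic heat integral equation with datum v₀, then for every ξ ∈ ℝ³: v(δ/2, ξ) ≥ τ_N · (W * W * W)(ξ + e₁), where τ_N = ε_N³ ∑_{k=1}^{N-1} (2^{2k - 7/3}/(3·2^{2k+1} - 1)) η_k² η_{k+1} e^{-2δ} (1 - e^{(δ/2)(1 - 3·2^{2k+1})}). -/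

import Mathlib

open MeasureTheory

noncomputable section

/-- `ℝ³` as Euclidean space. -/
abbrev E3 := EuclideanSpace ℝ (Fin 3)

/-- The first standard basis vector `e₁ = (1,0,0)` of `ℝ³`. -/
def e1 : E3 := EuclideanSpace.single 0 1

/-- Convolution of two `[0,∞]`-valued functions on `ℝ³` (lower Lebesgue integral). -/
def lconv (f g : E3 → ENNReal) : E3 → ENNReal := fun ξ => ∫⁻ y, f y * g (ξ - y)

/-- The triple convolution `f * f * f` of a `[0,∞]`-valued function on `ℝ³`. -/
def lconv3 (f : E3 → ENNReal) : E3 → ENNReal := lconv (lconv f f) f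

/-- `v` solves the Fourier-side cubic heat integral equation on `[0,T]` with datum `v₀`. -/
def SolvesFourierCubic (T : ℝ) (v₀ : E3 → ℝ) (v : ℝ → E3 → ℝ) : Prop :=
  ∀ t ∈ Set.Icc (0 : ℝ) T, ∀ ξ : E3,
    ENNReal.ofReal (v t ξ) =
      ENNReal.ofReal (Real.exp (-t * ‖ξ‖ ^ 2) * v₀ ξ) +
        ∫⁻ s in Set.Ioo (0 : ℝ) t,
          ENNReal.ofReal (Real.exp (-(t - s) * ‖ξ‖ ^ 2)) *
            lconv3 (fun y => ENNReal.ofReal (v s y)) ξ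

/-- `η_k = k^{-1/3}`. -/
def eta (k : ℕ) : ℝ := (k : ℝ) ^ (-(1 : ℝ) / 3)

/-- `ε_N = 1 / log (log N)`. -/
def eps (N : ℕ) : ℝ := 1 / Real.log (Real.log N)

open ENNReal

lemma my_lconv_mono {f₁ f₂ g₁ g₂ : E3 → ℝ≥0∞} (h₁ : ∀ x, f₁ x ≤ g₁ x) (h₂ : ∀ x, f₂ x ≤ g₂ x)
    (ξ : E3) : lconv f₁ f₂ ξ ≤ lconv g₁ g₂ ξ :=
  lintegral_mono fun y => mul_le_mul' (h₁ y) (h₂ _)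

lemma my_lconv_shift (F G : E3 → ℝ≥0∞) (c₁ c₂ : ℝ≥0∞) (hc₁ : c₁ ≠ ⊤) (hc₂ : c₂ ≠ ⊤)
    (a b ξ : E3) :
    lconv (fun x => c₁ * F (x - a)) (fun x => c₂ * G (x - b)) ξ
      = c₁ * c₂ * lconv F G (ξ - a - b) := by
  unfold lconv
  have harg : ∀ y : E3, ξ - y - b = (ξ - a - b) - (y - a) := fun y => by abel
  calc ∫⁻ y, (c₁ * F (y - a)) * (c₂ * G (ξ - y - b))
      = ∫⁻ y, (c₁ * c₂) * (F (y - a) * G ((ξ - a - b) - (y - a))) := by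
        congr 1; funext y; rw [harg y]; ring
    _ = (c₁ * c₂) * ∫⁻ y, F (y - a) * G ((ξ - a - b) - (y - a)) :=
        lintegral_const_mul' _ _ (ENNReal.mul_ne_top hc₁ hc₂)
    _ = (c₁ * c₂) * ∫⁻ y, F y * G ((ξ - a - b) - y) := by
        rw [lintegral_sub_right_eq_self (fun z => F z * G ((ξ - a - b) - z)) a]

lemma my_lconv_supp {F G : E3 → ℝ≥0∞} {c₁ c₂ : E3} {r₁ r₂ : ℝ}
    (hF : ∀ y, F y ≠ 0 → ‖y - c₁‖ ≤ r₁) (hG : ∀ y, G y ≠ 0 → ‖y - c₂‖ ≤ r₂)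
    (ξ : E3) (h : lconv F G ξ ≠ 0) : ‖ξ - (c₁ + c₂)‖ ≤ r₁ + r₂ := by
  by_contra hcon
  apply h
  have hz : ∀ y : E3, F y * G (ξ - y) = 0 := by
    intro y
    rcases eq_or_ne (F y) 0 with h1 | h1
    · simp [h1]
    rcases eq_or_ne (G (ξ - y)) 0 with h2 | h2
    · simp [h2]
    exact absurd (calc ‖ξ - (c₁ + c₂)‖ = ‖(y - c₁) + ((ξ - y) - c₂)‖ := by congr 1; abel
      _ ≤ ‖y - c₁‖ + ‖(ξ - y) - c₂‖ := norm_add_le _ _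
      _ ≤ r₁ + r₂ := add_le_add (hF y h1) (hG _ h2)) hcon
  unfold lconv
  simp only [hz, lintegral_zero]

lemma my_sum_mul_diag_le {s : Finset ℕ} (a b : ℕ → ℝ≥0∞) :
    ∑ k ∈ s, a k * b k ≤ (∑ k ∈ s, a k) * (∑ k ∈ s, b k) := by
  calc ∑ k ∈ s, a k * b k ≤ ∑ k ∈ s, a k * (∑ j ∈ s, b j) :=
        Finset.sum_le_sum fun k hk =>
          mul_le_mul_right (Finset.single_le_sum (fun _ _ => zero_le) hk) _
    _ = (∑ k ∈ s, a k) * (∑ j ∈ s, b j) := (Finset.sum_mul _ _ _).symm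

lemma my_sum_lintegral_le {α : Type*} [MeasurableSpace α] (μ : Measure α)
    (s : Finset ℕ) (f : ℕ → α → ℝ≥0∞) :
    ∑ k ∈ s, ∫⁻ y, f k y ∂μ ≤ ∫⁻ y, ∑ k ∈ s, f k y ∂μ := by
  classical
  induction s using Finset.induction with
  | empty => simp
  | insert _ _ h ih =>
    rw [Finset.sum_insert h]
    simp only [Finset.sum_insert h]
    exact le_trans (add_le_add_right ih _) (le_lintegral_add _ _)

lemma my_lintegral_exp (T M : ℝ) (hT : 0 ≤ T) (hM : 0 < M) :
    ENNReal.ofReal ((1 - Real.exp (-(M * T))) / M)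
      ≤ ∫⁻ s in Set.Ioo (0:ℝ) T, ENNReal.ofReal (Real.exp (-(M * s))) := by
  have hcont : Continuous fun s : ℝ => Real.exp (-(M * s)) := by continuity
  have hderiv : ∀ x ∈ Set.uIcc (0:ℝ) T,
      HasDerivAt (fun s : ℝ => -(Real.exp (-(M * s)) / M)) (Real.exp (-(M * x))) x := by
    intro x _
    have h1 : HasDerivAt (fun s : ℝ => -(M * s)) (-M) x := by
      simpa using ((hasDerivAt_id x).const_mul (-M))
    have h2 := (Real.hasDerivAt_exp (-(M * x))).comp x h1
    have h3 := (h2.div_const M).neg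
    have h4 : -(Real.exp (-(M * x)) * -M / M) = Real.exp (-(M * x)) := by field_simp
    rw [h4] at h3
    exact h3
  have h1 : ∫ s in (0:ℝ)..T, Real.exp (-(M * s))
      = (1 - Real.exp (-(M * T))) / M := by
    rw [intervalIntegral.integral_eq_sub_of_hasDerivAt hderiv
      (hcont.intervalIntegrable 0 T)]
    simp
    ring
  have h2 : ∫ s in Set.Ioo (0:ℝ) T, Real.exp (-(M * s))
      = (1 - Real.exp (-(M * T))) / M := by
    rw [← integral_Ioc_eq_integral_Ioo, ← intervalIntegral.integral_of_le hT, h1]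
  have hint : IntegrableOn (fun s : ℝ => Real.exp (-(M * s))) (Set.Ioo 0 T) :=
    (hcont.integrableOn_Icc).mono_set Set.Ioo_subset_Icc_self
  rw [← h2, ofReal_integral_eq_lintegral_ofReal hint
    (Filter.Eventually.of_forall fun x => (Real.exp_pos _).le)]

set_option maxHeartbeats 2000000 in
theorem stmt_10 (δ : ℝ) (hδ : 0 < δ)
    (W : E3 → ℝ) (hWcont : Continuous W) (hWnonneg : ∀ ξ, 0 ≤ W ξ) (hWne : W ≠ 0)
    (hWsupp : Function.support W ⊆ Metric.closedBall ((1 / 6 : ℝ) • e1) (1 / 6))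
    (N : ℕ) (hN : 3 ≤ N)
    (v₀ : E3 → ℝ)
    (hv₀ : v₀ = fun ξ =>
      eps N * ∑ k ∈ Finset.Icc 1 N,
        (2 : ℝ) ^ (2 * (k : ℝ) / 3) * eta k *
          (W (ξ + ((2 : ℝ) ^ k - 1) • e1) + W (ξ - ((2 : ℝ) ^ k - 1) • e1)) / 2)
    (v : ℝ → E3 → ℝ) (hvmeas : Measurable (Function.uncurry v))
    (hvnonneg : ∀ t ξ, 0 ≤ v t ξ)
    (hsol : SolvesFourierCubic (δ / 2) v₀ v) :
    ∀ ξ : E3,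
      ENNReal.ofReal
          (eps N ^ 3 * ∑ k ∈ Finset.Icc 1 (N - 1),
            (2 : ℝ) ^ (2 * (k : ℝ) - 7 / 3) / (3 * (2 : ℝ) ^ (2 * k + 1) - 1) *
              eta k ^ 2 * eta (k + 1) * Real.exp (-2 * δ) *
              (1 - Real.exp (δ / 2 * (1 - 3 * (2 : ℝ) ^ (2 * k + 1))))) *
        lconv3 (fun y => ENNReal.ofReal (W y)) (ξ + e1) ≤
      ENNReal.ofReal (v (δ / 2) ξ) := by
  intro ξ
  classical
  set T : ℝ := δ / 2 with hTdef
  have hT0 : 0 < T := half_pos hδ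
  set 𝕎 : E3 → ℝ≥0∞ := fun y => ENNReal.ofReal (W y) with h𝕎
  set L : ℝ≥0∞ := lconv3 𝕎 (ξ + e1) with hLdef
  rcases eq_or_ne L 0 with hL0 | hL0
  · rw [hL0, mul_zero]; exact zero_le
  -- positivity of eps
  have hεpos : 0 < eps N := by
    have h3N : (3:ℝ) ≤ (N:ℝ) := by exact_mod_cast hN
    have hlog3 : 1 < Real.log 3 := by
      rw [show (1:ℝ) = Real.log (Real.exp 1) by rw [Real.log_exp]]
      apply Real.log_lt_log (Real.exp_pos 1)
      exact lt_of_lt_of_le Real.exp_one_lt_d9 (by norm_num)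
    have hlogN : 1 < Real.log N := lt_of_lt_of_le hlog3 (Real.log_le_log (by norm_num) h3N)
    exact one_div_pos.mpr (Real.log_pos hlogN)
  have hη : ∀ k : ℕ, 0 ≤ eta k := fun k => Real.rpow_nonneg (Nat.cast_nonneg k) _
  -- coefficients
  set c : ℕ → ℝ := fun k => eps N * ((2:ℝ) ^ (2*(k:ℝ)/3) * eta k) / 2 with hcdef
  set A : ℕ → ℝ := fun k => ((2:ℝ)^k - 2/3)^2 with hAdef
  set M : ℕ → ℝ := fun k => 3*(2:ℝ)^(2*k+1) - 1 with hMdef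
  have hcnn : ∀ k, 0 ≤ c k := by
    intro k
    have := hη k
    have h2 : (0:ℝ) < (2:ℝ) ^ (2*(k:ℝ)/3) := Real.rpow_pos_of_pos (by norm_num) _
    positivity
  have hMpos : ∀ k, 0 < M k := by
    intro k
    simp only [hMdef]
    have : (1:ℝ) ≤ (2:ℝ)^(2*k+1) := one_le_pow₀ (by norm_num)
    nlinarith
  have he1 : ‖e1‖ = 1 := by simp [e1, EuclideanSpace.norm_single]
  have hWnorm : ∀ y : E3, W y ≠ 0 → ‖y‖ ≤ 1/3 := by
    intro y hy
    have h := hWsupp hy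
    rw [Metric.mem_closedBall, dist_eq_norm] at h
    calc ‖y‖ = ‖(y - (1/6:ℝ)•e1) + (1/6:ℝ)•e1‖ := by rw [sub_add_cancel]
      _ ≤ ‖y - (1/6:ℝ)•e1‖ + ‖(1/6:ℝ)•e1‖ := norm_add_le _ _
      _ ≤ 1/6 + 1/6 := by
          apply add_le_add h
          rw [norm_smul, he1]; norm_num
      _ = 1/3 := by norm_num
  have h𝕎supp : ∀ y : E3, 𝕎 y ≠ 0 → ‖y - (1/6:ℝ)•e1‖ ≤ 1/6 := by
    intro y hy
    have hWy : W y ≠ 0 := by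
      intro h0; apply hy; simp [h𝕎, h0]
    have h := hWsupp hWy
    rwa [Metric.mem_closedBall, dist_eq_norm] at h
  -- norm bound on ξ
  have hξ4 : ‖ξ‖^2 ≤ 4 := by
    have hWW : ∀ y : E3, lconv 𝕎 𝕎 y ≠ 0 → ‖y - ((1/6:ℝ)•e1 + (1/6:ℝ)•e1)‖ ≤ 1/6 + 1/6 :=
      fun y hy => my_lconv_supp h𝕎supp h𝕎supp y hy
    have hL0' : lconv (lconv 𝕎 𝕎) 𝕎 (ξ + e1) ≠ 0 := hL0
    have h3 := my_lconv_supp hWW h𝕎supp (ξ + e1) hL0'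
    have hvec : ξ + e1 - ((1/6:ℝ)•e1 + (1/6:ℝ)•e1 + (1/6:ℝ)•e1) = ξ + (1/2:ℝ)•e1 := by
      module
    rw [hvec] at h3
    have hn : ‖ξ‖ ≤ 1 := by
      calc ‖ξ‖ = ‖(ξ + (1/2:ℝ)•e1) - (1/2:ℝ)•e1‖ := by rw [add_sub_cancel_right]
        _ ≤ ‖ξ + (1/2:ℝ)•e1‖ + ‖(1/2:ℝ)•e1‖ := norm_sub_le _ _
        _ ≤ 1/2 + 1/2 := by
            refine add_le_add (le_trans h3 (by norm_num)) ?_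
            rw [norm_smul, he1]; norm_num
        _ = 1 := by norm_num
    nlinarith [norm_nonneg ξ]
  -- exponent comparison
  have hMA : ∀ k : ℕ, 2 * A k + A (k+1) ≤ M k := by
    intro k
    simp only [hAdef, hMdef]
    have hx : (1:ℝ) ≤ 2^k := one_le_pow₀ (by norm_num)
    have e2 : (2:ℝ)^(k+1) = 2 * 2^k := by rw [pow_succ]; ring
    have e3 : (2:ℝ)^(2*k+1) = 2 * ((2:ℝ)^k)^2 := by
      rw [show 2*k+1 = k*2+1 from by ring, pow_succ, pow_mul]; ring
    rw [e2, e3]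
    nlinarith
  -- key pointwise bound
  have key : ∀ s ∈ Set.Ioo (0:ℝ) T,
      ∑ k ∈ Finset.Icc 1 (N-1),
        ENNReal.ofReal (c k ^ 2 * c (k+1)) * ENNReal.ofReal (Real.exp (-(M k * s))) * L
      ≤ lconv3 (fun y => ENNReal.ofReal (v s y)) ξ := by
    intro s hs
    have hs0 : (0:ℝ) ≤ s := hs.1.le
    set f : E3 → ℝ≥0∞ := fun y => ENNReal.ofReal (v s y) with hfdef
    have hf_low : ∀ ζ : E3, ENNReal.ofReal (Real.exp (-s * ‖ζ‖^2) * v₀ ζ) ≤ f ζ := by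
      intro ζ
      show ENNReal.ofReal (Real.exp (-s * ‖ζ‖^2) * v₀ ζ) ≤ ENNReal.ofReal (v s ζ)
      rw [hsol s ⟨hs.1.le, hs.2.le⟩ ζ]
      exact self_le_add_right _ _
    have htk_nn : ∀ (k:ℕ) (ζ:E3), (0:ℝ) ≤ eps N * ((2:ℝ)^(2*(k:ℝ)/3) * eta k *
        (W (ζ + ((2:ℝ)^k-1)•e1) + W (ζ - ((2:ℝ)^k-1)•e1)) / 2) := by
      intro k ζ
      have hcoefnn : (0:ℝ) ≤ (2:ℝ) ^ (2*(k:ℝ)/3) * eta k :=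
        mul_nonneg (Real.rpow_pos_of_pos (by norm_num) _).le (hη k)
      exact mul_nonneg hεpos.le (div_nonneg
        (mul_nonneg hcoefnn (add_nonneg (hWnonneg _) (hWnonneg _))) (by norm_num))
    -- term bound
    have htb : ∀ k : ℕ, ∀ ζ z : E3, (z = ζ - ((2:ℝ)^k - 1) • e1 ∨ z = ζ + ((2:ℝ)^k - 1) • e1) →
        c k * Real.exp (-(A k * s)) * W z
          ≤ Real.exp (-s * ‖ζ‖^2) *
            (eps N * ((2:ℝ) ^ (2*(k:ℝ)/3) * eta k *
              (W (ζ + ((2:ℝ)^k - 1) • e1) + W (ζ - ((2:ℝ)^k - 1) • e1)) / 2)) := by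
      intro k ζ z hz
      rcases eq_or_ne (W z) 0 with h0 | h0
      · rw [h0, mul_zero]
        exact mul_nonneg (Real.exp_pos _).le (htk_nn k ζ)
      · have hzn : ‖z‖ ≤ 1/3 := hWnorm z h0
        have hak : (0:ℝ) ≤ (2:ℝ)^k - 1 := by
          have : (1:ℝ) ≤ 2^k := one_le_pow₀ (by norm_num)
          linarith
        have hsm : ‖((2:ℝ)^k - 1) • e1‖ = (2:ℝ)^k - 1 := by
          rw [norm_smul, he1, mul_one, Real.norm_eq_abs, abs_of_nonneg hak]
        have hζn : ‖ζ‖ ≤ (2:ℝ)^k - 2/3 := by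
          rcases hz with h | h
          · have hζeq : ζ = z + ((2:ℝ)^k - 1) • e1 := by rw [h]; abel
            rw [hζeq]
            calc ‖z + ((2:ℝ)^k-1)•e1‖ ≤ ‖z‖ + ‖((2:ℝ)^k-1)•e1‖ := norm_add_le _ _
              _ ≤ 1/3 + ((2:ℝ)^k - 1) := by rw [hsm]; linarith
              _ = (2:ℝ)^k - 2/3 := by ring
          · have hζeq : ζ = z - ((2:ℝ)^k - 1) • e1 := by rw [h]; abel
            rw [hζeq]
            calc ‖z - ((2:ℝ)^k-1)•e1‖ ≤ ‖z‖ + ‖((2:ℝ)^k-1)•e1‖ := norm_sub_le _ _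
              _ ≤ 1/3 + ((2:ℝ)^k - 1) := by rw [hsm]; linarith
              _ = (2:ℝ)^k - 2/3 := by ring
        have hζ2 : ‖ζ‖^2 ≤ A k := by
          rw [hAdef]
          exact pow_le_pow_left₀ (norm_nonneg _) hζn 2
        have hexp : Real.exp (-(A k * s)) ≤ Real.exp (-s * ‖ζ‖^2) := by
          apply Real.exp_le_exp.mpr
          nlinarith
        have hWle : W z ≤ W (ζ + ((2:ℝ)^k-1)•e1) + W (ζ - ((2:ℝ)^k-1)•e1) := by
          rcases hz with h | h
          · rw [h]; exact le_add_of_nonneg_left (hWnonneg _)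
          · rw [h]; exact le_add_of_nonneg_right (hWnonneg _)
        calc c k * Real.exp (-(A k * s)) * W z = Real.exp (-(A k * s)) * (c k * W z) := by ring
          _ ≤ Real.exp (-s * ‖ζ‖^2) *
              (eps N * ((2:ℝ) ^ (2*(k:ℝ)/3) * eta k *
                (W (ζ + ((2:ℝ)^k - 1) • e1) + W (ζ - ((2:ℝ)^k - 1) • e1)) / 2)) := by
              apply mul_le_mul hexp ?_ (mul_nonneg (hcnn k) (hWnonneg z)) (Real.exp_pos _).le
              simp only [hcdef]
              have hco : (0:ℝ) ≤ eps N * ((2:ℝ)^(2*(k:ℝ)/3) * eta k) / 2 := by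
                refine div_nonneg (mul_nonneg hεpos.le ?_) (by norm_num)
                exact mul_nonneg (Real.rpow_pos_of_pos (by norm_num) _).le (hη k)
              calc eps N * ((2:ℝ)^(2*(k:ℝ)/3) * eta k) / 2 * W z
                  ≤ eps N * ((2:ℝ)^(2*(k:ℝ)/3) * eta k) / 2 *
                      (W (ζ + ((2:ℝ)^k-1)•e1) + W (ζ - ((2:ℝ)^k-1)•e1)) :=
                    mul_le_mul_of_nonneg_left hWle hco
                _ = eps N * ((2:ℝ)^(2*(k:ℝ)/3) * eta k *
                      (W (ζ + ((2:ℝ)^k-1)•e1) + W (ζ - ((2:ℝ)^k-1)•e1)) / 2) := by ring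
    -- the two families of bump lower bounds
    set Gfun : ℕ → E3 → ℝ≥0∞ := fun k z =>
      ENNReal.ofReal (c k * Real.exp (-(A k * s))) * 𝕎 (z - ((2:ℝ)^k - 1) • e1) with hGdef
    set Hfun : ℕ → E3 → ℝ≥0∞ := fun k z =>
      ENNReal.ofReal (c (k+1) * Real.exp (-(A (k+1) * s))) *
        𝕎 (z - (-(((2:ℝ)^(k+1) - 1) • e1))) with hHdef
    have hterm_nn : ∀ k : ℕ, (0:ℝ) ≤ c k * Real.exp (-(A k * s)) :=
      fun k => mul_nonneg (hcnn k) (Real.exp_pos _).le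
    have hGle : ∀ ζ : E3, ∑ k ∈ Finset.Icc 1 (N-1), Gfun k ζ ≤ f ζ := by
      intro ζ
      refine le_trans ?_ (hf_low ζ)
      have hGreal : ∑ k ∈ Finset.Icc 1 (N-1),
          c k * Real.exp (-(A k * s)) * W (ζ - ((2:ℝ)^k-1)•e1)
          ≤ Real.exp (-s * ‖ζ‖^2) * v₀ ζ := by
        simp only [hv₀]
        calc ∑ k ∈ Finset.Icc 1 (N-1), c k * Real.exp (-(A k * s)) * W (ζ - ((2:ℝ)^k-1)•e1)
            ≤ ∑ k ∈ Finset.Icc 1 (N-1), Real.exp (-s * ‖ζ‖^2) *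
                (eps N * ((2:ℝ) ^ (2*(k:ℝ)/3) * eta k *
                  (W (ζ + ((2:ℝ)^k - 1) • e1) + W (ζ - ((2:ℝ)^k - 1) • e1)) / 2)) :=
              Finset.sum_le_sum fun k hk => htb k ζ _ (Or.inl rfl)
          _ ≤ ∑ k ∈ Finset.Icc 1 N, Real.exp (-s * ‖ζ‖^2) *
                (eps N * ((2:ℝ) ^ (2*(k:ℝ)/3) * eta k *
                  (W (ζ + ((2:ℝ)^k - 1) • e1) + W (ζ - ((2:ℝ)^k - 1) • e1)) / 2)) := by
              apply Finset.sum_le_sum_of_subset_of_nonneg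
              · exact Finset.Icc_subset_Icc_right (Nat.sub_le N 1)
              · intro k _ _
                exact mul_nonneg (Real.exp_pos _).le (htk_nn k ζ)
          _ = Real.exp (-s * ‖ζ‖^2) * (eps N * ∑ k ∈ Finset.Icc 1 N,
                (2:ℝ) ^ (2*(k:ℝ)/3) * eta k *
                  (W (ζ + ((2:ℝ)^k - 1) • e1) + W (ζ - ((2:ℝ)^k - 1) • e1)) / 2) := by
              rw [Finset.mul_sum, Finset.mul_sum]
      calc ∑ k ∈ Finset.Icc 1 (N-1), Gfun k ζ
          = ENNReal.ofReal (∑ k ∈ Finset.Icc 1 (N-1),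
              c k * Real.exp (-(A k * s)) * W (ζ - ((2:ℝ)^k-1)•e1)) := by
            rw [ENNReal.ofReal_sum_of_nonneg
              (fun k _ => mul_nonneg (hterm_nn k) (hWnonneg _))]
            refine Finset.sum_congr rfl fun k hk => ?_
            simp only [hGdef, h𝕎]
            exact (ENNReal.ofReal_mul (hterm_nn k)).symm
        _ ≤ ENNReal.ofReal (Real.exp (-s * ‖ζ‖^2) * v₀ ζ) := ENNReal.ofReal_le_ofReal hGreal
    have hHle : ∀ ζ : E3, ∑ k ∈ Finset.Icc 1 (N-1), Hfun k ζ ≤ f ζ := by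
      intro ζ
      refine le_trans ?_ (hf_low ζ)
      set uu : ℕ → ℝ := fun j => Real.exp (-s * ‖ζ‖^2) *
        (eps N * ((2:ℝ) ^ (2*(j:ℝ)/3) * eta j *
          (W (ζ + ((2:ℝ)^j - 1) • e1) + W (ζ - ((2:ℝ)^j - 1) • e1)) / 2)) with huu
      have huu_nn : ∀ j, 0 ≤ uu j := by
        intro j
        simp only [huu]
        exact mul_nonneg (Real.exp_pos _).le (htk_nn j ζ)
      have hHreal : ∑ k ∈ Finset.Icc 1 (N-1),
          c (k+1) * Real.exp (-(A (k+1) * s)) * W (ζ + ((2:ℝ)^(k+1)-1)•e1)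
          ≤ Real.exp (-s * ‖ζ‖^2) * v₀ ζ := by
        simp only [hv₀]
        calc ∑ k ∈ Finset.Icc 1 (N-1),
            c (k+1) * Real.exp (-(A (k+1) * s)) * W (ζ + ((2:ℝ)^(k+1)-1)•e1)
            ≤ ∑ k ∈ Finset.Icc 1 (N-1), uu (k+1) :=
              Finset.sum_le_sum fun k hk => by
                simpa only [huu] using htb (k+1) ζ _ (Or.inr rfl)
          _ = ∑ j ∈ (Finset.Icc 1 (N-1)).image (· + 1), uu j :=
              (Finset.sum_image (fun x _ y _ h => by omega)).symm
          _ ≤ ∑ j ∈ Finset.Icc 1 N, uu j := by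
              apply Finset.sum_le_sum_of_subset_of_nonneg
              · intro j hj
                simp only [Finset.mem_image, Finset.mem_Icc] at hj ⊢
                obtain ⟨x, hx, rfl⟩ := hj
                omega
              · intro j _ _; exact huu_nn j
          _ = Real.exp (-s * ‖ζ‖^2) * (eps N * ∑ k ∈ Finset.Icc 1 N,
                (2:ℝ) ^ (2*(k:ℝ)/3) * eta k *
                  (W (ζ + ((2:ℝ)^k - 1) • e1) + W (ζ - ((2:ℝ)^k - 1) • e1)) / 2) := by
              rw [Finset.mul_sum, Finset.mul_sum]
      calc ∑ k ∈ Finset.Icc 1 (N-1), Hfun k ζ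
          = ENNReal.ofReal (∑ k ∈ Finset.Icc 1 (N-1),
              c (k+1) * Real.exp (-(A (k+1) * s)) * W (ζ + ((2:ℝ)^(k+1)-1)•e1)) := by
            rw [ENNReal.ofReal_sum_of_nonneg
              (fun k _ => mul_nonneg (hterm_nn (k+1)) (hWnonneg _))]
            refine Finset.sum_congr rfl fun k hk => ?_
            simp only [hHdef, h𝕎, sub_neg_eq_add]
            exact (ENNReal.ofReal_mul (hterm_nn (k+1))).symm
        _ ≤ ENNReal.ofReal (Real.exp (-s * ‖ζ‖^2) * v₀ ζ) := ENNReal.ofReal_le_ofReal hHreal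
    -- convolution cascade
    have hconv1 : ∀ y : E3, ∑ k ∈ Finset.Icc 1 (N-1), lconv (Gfun k) (Gfun k) y ≤ lconv f f y := by
      intro y
      calc ∑ k ∈ Finset.Icc 1 (N-1), lconv (Gfun k) (Gfun k) y
          ≤ ∫⁻ z, ∑ k ∈ Finset.Icc 1 (N-1), Gfun k z * Gfun k (y - z) :=
            my_sum_lintegral_le volume _ _
        _ ≤ ∫⁻ z, (∑ k ∈ Finset.Icc 1 (N-1), Gfun k z) *
              (∑ k ∈ Finset.Icc 1 (N-1), Gfun k (y - z)) :=
            lintegral_mono fun z => my_sum_mul_diag_le _ _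
        _ ≤ lconv f f y := lintegral_mono fun z => mul_le_mul' (hGle z) (hGle _)
    have hconv2 : ∑ k ∈ Finset.Icc 1 (N-1),
        lconv (lconv (Gfun k) (Gfun k)) (Hfun k) ξ ≤ lconv3 f ξ := by
      calc ∑ k ∈ Finset.Icc 1 (N-1), lconv (lconv (Gfun k) (Gfun k)) (Hfun k) ξ
          ≤ ∫⁻ y, ∑ k ∈ Finset.Icc 1 (N-1), lconv (Gfun k) (Gfun k) y * Hfun k (ξ - y) :=
            my_sum_lintegral_le volume _ _
        _ ≤ ∫⁻ y, (∑ k ∈ Finset.Icc 1 (N-1), lconv (Gfun k) (Gfun k) y) *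
              (∑ k ∈ Finset.Icc 1 (N-1), Hfun k (ξ - y)) :=
            lintegral_mono fun y => my_sum_mul_diag_le _ _
        _ ≤ ∫⁻ y, lconv f f y * f (ξ - y) :=
            lintegral_mono fun y => mul_le_mul' (hconv1 y) (hHle _)
        _ = lconv3 f ξ := rfl
    -- identify each summand
    have hEk : ∀ k ∈ Finset.Icc 1 (N-1),
        ENNReal.ofReal (c k ^ 2 * c (k+1)) * ENNReal.ofReal (Real.exp (-(M k * s))) * L
          ≤ lconv (lconv (Gfun k) (Gfun k)) (Hfun k) ξ := by
      intro k hk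
      have h1 : lconv (Gfun k) (Gfun k) = fun y =>
          (ENNReal.ofReal (c k * Real.exp (-(A k * s))) *
            ENNReal.ofReal (c k * Real.exp (-(A k * s)))) *
            lconv 𝕎 𝕎 (y - (((2:ℝ)^k - 1) • e1 + ((2:ℝ)^k - 1) • e1)) := by
        funext y
        rw [hGdef]
        rw [my_lconv_shift 𝕎 𝕎 _ _ ENNReal.ofReal_ne_top ENNReal.ofReal_ne_top, sub_sub]
      rw [h1, hHdef,
        my_lconv_shift (lconv 𝕎 𝕎) 𝕎 _ _
          (ENNReal.mul_ne_top ENNReal.ofReal_ne_top ENNReal.ofReal_ne_top) ENNReal.ofReal_ne_top]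
      have hvec : ξ - (((2:ℝ)^k - 1) • e1 + ((2:ℝ)^k - 1) • e1) - (-(((2:ℝ)^(k+1) - 1) • e1))
          = ξ + e1 := by
        have h2 : (2:ℝ)^(k+1) = 2 * 2^k := by rw [pow_succ]; ring
        rw [h2]
        module
      rw [hvec]
      have hLrw : lconv (lconv 𝕎 𝕎) 𝕎 (ξ + e1) = L := rfl
      rw [hLrw]
      apply mul_le_mul_left
      have hsplit : ENNReal.ofReal (c k * Real.exp (-(A k * s))) *
          ENNReal.ofReal (c k * Real.exp (-(A k * s))) *
          ENNReal.ofReal (c (k+1) * Real.exp (-(A (k+1) * s)))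
          = ENNReal.ofReal ((c k * Real.exp (-(A k * s))) * (c k * Real.exp (-(A k * s))) *
              (c (k+1) * Real.exp (-(A (k+1) * s)))) := by
        rw [ENNReal.ofReal_mul (mul_nonneg (hterm_nn k) (hterm_nn k)),
          ENNReal.ofReal_mul (hterm_nn k)]
      rw [hsplit, ← ENNReal.ofReal_mul (mul_nonneg (pow_nonneg (hcnn k) 2) (hcnn (k+1)))]
      apply ENNReal.ofReal_le_ofReal
      have hee : (c k * Real.exp (-(A k * s))) * (c k * Real.exp (-(A k * s))) *
          (c (k+1) * Real.exp (-(A (k+1) * s)))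
          = c k ^ 2 * c (k+1) * Real.exp (-((2 * A k + A (k+1)) * s)) := by
        calc (c k * Real.exp (-(A k * s))) * (c k * Real.exp (-(A k * s))) *
            (c (k+1) * Real.exp (-(A (k+1) * s)))
            = c k ^ 2 * c (k+1) *
              (Real.exp (-(A k * s)) * Real.exp (-(A k * s)) * Real.exp (-(A (k+1) * s))) := by
              ring
          _ = c k ^ 2 * c (k+1) * Real.exp (-((2 * A k + A (k+1)) * s)) := by
              rw [← Real.exp_add, ← Real.exp_add]
              congr 1
              ring
      rw [hee]
      apply mul_le_mul_of_nonneg_left ?_ (mul_nonneg (pow_nonneg (hcnn k) 2) (hcnn (k+1)))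
      apply Real.exp_le_exp.mpr
      have := hMA k
      nlinarith
    calc ∑ k ∈ Finset.Icc 1 (N-1),
        ENNReal.ofReal (c k ^ 2 * c (k+1)) * ENNReal.ofReal (Real.exp (-(M k * s))) * L
        ≤ ∑ k ∈ Finset.Icc 1 (N-1), lconv (lconv (Gfun k) (Gfun k)) (Hfun k) ξ :=
          Finset.sum_le_sum hEk
      _ ≤ lconv3 f ξ := hconv2
  have main : ∑ k ∈ Finset.Icc 1 (N-1),
      ENNReal.ofReal (Real.exp (-2*δ) * (c k ^2 * c (k+1)) * ((1 - Real.exp (-(M k * T)))/ M k)) * L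
      ≤ ∫⁻ s in Set.Ioo (0:ℝ) T,
          ENNReal.ofReal (Real.exp (-(T - s) * ‖ξ‖ ^ 2)) *
            lconv3 (fun y => ENNReal.ofReal (v s y)) ξ := by
    have hpt : ∀ s ∈ Set.Ioo (0:ℝ) T,
        ∑ k ∈ Finset.Icc 1 (N-1), ENNReal.ofReal (Real.exp (-2*δ) * (c k ^2 * c (k+1))) *
            ENNReal.ofReal (Real.exp (-(M k * s))) * L
        ≤ ENNReal.ofReal (Real.exp (-(T - s) * ‖ξ‖ ^ 2)) *
            lconv3 (fun y => ENNReal.ofReal (v s y)) ξ := by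
      intro s hs
      have h2δ : Real.exp (-2*δ) ≤ Real.exp (-(T-s) * ‖ξ‖^2) := by
        apply Real.exp_le_exp.mpr
        have h1 : 0 ≤ T - s := by linarith [hs.2]
        have h2 : T - s ≤ T := by linarith [hs.1]
        have hmul : (T-s)*‖ξ‖^2 ≤ T*4 := mul_le_mul h2 hξ4 (sq_nonneg _) hT0.le
        linarith [hmul, hTdef]
      calc ∑ k ∈ Finset.Icc 1 (N-1), ENNReal.ofReal (Real.exp (-2*δ) * (c k ^2 * c (k+1))) *
              ENNReal.ofReal (Real.exp (-(M k * s))) * L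
          = ENNReal.ofReal (Real.exp (-2*δ)) * ∑ k ∈ Finset.Icc 1 (N-1),
              ENNReal.ofReal (c k ^ 2 * c (k+1)) * ENNReal.ofReal (Real.exp (-(M k * s))) * L := by
            rw [Finset.mul_sum]
            refine Finset.sum_congr rfl fun k hk => ?_
            rw [ENNReal.ofReal_mul (Real.exp_pos _).le]
            ring
        _ ≤ ENNReal.ofReal (Real.exp (-(T-s) * ‖ξ‖^2)) * lconv3 (fun y => ENNReal.ofReal (v s y)) ξ :=
            mul_le_mul' (ENNReal.ofReal_le_ofReal h2δ) (key s hs)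
    calc ∑ k ∈ Finset.Icc 1 (N-1),
        ENNReal.ofReal (Real.exp (-2*δ) * (c k ^2 * c (k+1)) * ((1 - Real.exp (-(M k * T)))/ M k)) * L
        ≤ ∑ k ∈ Finset.Icc 1 (N-1), ∫⁻ s in Set.Ioo (0:ℝ) T,
            ENNReal.ofReal (Real.exp (-2*δ) * (c k ^2 * c (k+1))) *
              ENNReal.ofReal (Real.exp (-(M k * s))) * L := by
          refine Finset.sum_le_sum fun k hk => ?_
          have hXnn : (0:ℝ) ≤ Real.exp (-2*δ) * (c k ^2 * c (k+1)) :=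
            mul_nonneg (Real.exp_pos _).le (mul_nonneg (pow_nonneg (hcnn k) 2) (hcnn (k+1)))
          have hmeas : Measurable fun s : ℝ => ENNReal.ofReal (Real.exp (-2*δ) * (c k ^2 * c (k+1))) *
              ENNReal.ofReal (Real.exp (-(M k * s))) := by
            apply Measurable.const_mul
            exact ((measurable_const.mul measurable_id).neg.exp).ennreal_ofReal
          rw [lintegral_mul_const _ hmeas, lintegral_const_mul' _ _ ENNReal.ofReal_ne_top,
            ENNReal.ofReal_mul hXnn]
          exact mul_le_mul_left (mul_le_mul_right (my_lintegral_exp T (M k) hT0.le (hMpos k)) _) L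
      _ ≤ ∫⁻ s in Set.Ioo (0:ℝ) T, ∑ k ∈ Finset.Icc 1 (N-1),
            ENNReal.ofReal (Real.exp (-2*δ) * (c k ^2 * c (k+1))) *
              ENNReal.ofReal (Real.exp (-(M k * s))) * L :=
          my_sum_lintegral_le _ _ _
      _ ≤ ∫⁻ s in Set.Ioo (0:ℝ) T,
            ENNReal.ofReal (Real.exp (-(T - s) * ‖ξ‖ ^ 2)) *
              lconv3 (fun y => ENNReal.ofReal (v s y)) ξ := by
          refine lintegral_mono_ae ?_
          filter_upwards [ae_restrict_mem measurableSet_Ioo] with s hs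
          exact hpt s hs
  -- conclude
  have hfin := hsol T ⟨hT0.le, le_refl T⟩ ξ
  rw [hfin]
  refine le_trans ?_ (self_le_add_left _ _)
  refine le_trans ?_ main
  -- identify coefficients
  rw [Finset.mul_sum, ENNReal.ofReal_sum_of_nonneg ?nn, Finset.sum_mul]
  case nn =>
    intro k hk
    have h1 : (0:ℝ) ≤ (2:ℝ) ^ (2*(k:ℝ) - 7/3) := (Real.rpow_pos_of_pos (by norm_num) _).le
    have h2 := hMpos k
    rw [hMdef] at h2
    have h3 : Real.exp (T * (1 - 3 * (2:ℝ) ^ (2*k+1))) ≤ 1 := by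
      rw [Real.exp_le_one_iff]
      have : (1:ℝ) ≤ (2:ℝ)^(2*k+1) := one_le_pow₀ (by norm_num)
      nlinarith [hT0.le]
    refine mul_nonneg (by positivity) ?_
    refine mul_nonneg (mul_nonneg (mul_nonneg (mul_nonneg ?_ (sq_nonneg _)) (hη _)) (Real.exp_pos _).le) (by linarith)
    exact div_nonneg h1 h2.le
  apply Finset.sum_le_sum
  intro k hk
  refine le_of_eq ?_
  congr 1
  congr 1
  -- real identity
  have hcc : c k ^ 2 * c (k+1) = eps N ^ 3 * eta k ^ 2 * eta (k+1) * (2:ℝ)^(2*(k:ℝ) - 7/3) := by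
    simp only [hcdef]
    have h8 : (8:ℝ) = (2:ℝ)^(3:ℝ) := by
      rw [show (3:ℝ) = ((3:ℕ):ℝ) by norm_num, Real.rpow_natCast]; norm_num
    have hr : ((2:ℝ)^(2*(k:ℝ)/3))^(2:ℕ) * (2:ℝ)^(2*(((k+1):ℕ):ℝ)/3) = (2:ℝ)^(2*(k:ℝ) - 7/3) * 8 := by
      rw [← Real.rpow_natCast ((2:ℝ)^(2*(k:ℝ)/3)) 2, ← Real.rpow_mul (by norm_num : (0:ℝ) ≤ 2),
          ← Real.rpow_add (by norm_num : (0:ℝ) < 2), h8,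
          ← Real.rpow_add (by norm_num : (0:ℝ) < 2)]
      congr 1
      push_cast
      ring
    have hexpand : (eps N * ((2:ℝ)^(2*(k:ℝ)/3) * eta k)/2)^2 * (eps N * ((2:ℝ)^(2*(((k+1):ℕ):ℝ)/3) * eta (k+1))/2)
        = eps N ^ 3 * eta k ^ 2 * eta (k+1) * (((2:ℝ)^(2*(k:ℝ)/3))^(2:ℕ) * (2:ℝ)^(2*(((k+1):ℕ):ℝ)/3)) / 8 := by
      ring
    rw [hexpand, hr]
    ring
  have hexpid : δ / 2 * (1 - 3 * (2:ℝ) ^ (2*k+1)) = -(M k * T) := by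
    simp only [hMdef, hTdef]; ring
  rw [hexpid, hcc, hMdef]
  ring
end
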